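/- Let q be a real number with 0 < q < 1, let x be a real number, and let n be a nonnegative integer. Then the q-Euler polynomial satisfies E_{n,q}(x) = ∑_{k=0}^n C(n,k) · q^{kx} · E_{k,q} · [x]_q^{n−k}, where E_{k,q} are the q-Euler numbers. -/

import Mathlib

open Filter Finset Topology

lemma inner_eval (t : ℝ) (n j : ℕ) (hj : j ≤ n) :
    ∑ k ∈ Finset.range (n+1), ((n.choose k : ℝ) * (k.choose j : ℝ)) * t^k * (1-t)^(n-k)
      = (n.choose j : ℝ) * t^j := by
  have h1 : ∀ k ∈ Finset.range (n+1),
      ((n.choose k : ℝ) * (k.choose j : ℝ)) * t^k * (1-t)^(n-k)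
      = (n.choose j : ℝ) * t^j *
        (((n-j).choose (k-j) : ℝ) * t^(k-j) * (1-t)^((n-j)-(k-j))) ∨
      (j > k ∧ ((n.choose k : ℝ) * (k.choose j : ℝ)) * t^k * (1-t)^(n-k) = 0) := by
    intro k hk
    simp only [Finset.mem_range] at hk
    by_cases hjk : j ≤ k
    · left
      have hc := Nat.choose_mul (n := n) hjk
      have hc' : (n.choose k : ℝ) * (k.choose j : ℝ)
          = (n.choose j : ℝ) * ((n-j).choose (k-j) : ℝ) := by exact_mod_cast congrArg (Nat.cast (R := ℝ)) hc
      rw [hc']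
      have ht : t ^ k = t ^ j * t ^ (k - j) := by
        rw [← pow_add, Nat.add_sub_cancel' hjk]
      have hs : (n : ℕ) - k = (n-j) - (k-j) := by omega
      rw [ht, hs]; ring
    · right
      refine ⟨by omega, ?_⟩
      rw [Nat.choose_eq_zero_of_lt (show k < j by omega)]
      simp
  rw [← Finset.sum_subset (show Finset.Ico j (n+1) ⊆ Finset.range (n+1) by
      intro k hk; simp only [Finset.mem_Ico, Finset.mem_range] at *; omega) ?h2]
  case h2 =>
    intro k hk hk'
    simp only [Finset.mem_range, Finset.mem_Ico, not_and, not_lt] at hk hk'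
    have hkj : k < j := by by_contra hc; exact absurd hk (not_lt.mpr (hk' (by omega)))
    rw [Nat.choose_eq_zero_of_lt hkj]
    simp
  rw [Finset.sum_Ico_eq_sum_range]
  have hnj : n + 1 - j = (n - j) + 1 := by omega
  rw [hnj]
  have h3 : ∀ i ∈ Finset.range ((n-j)+1),
      ((n.choose (j+i) : ℝ) * ((j+i).choose j : ℝ)) * t^(j+i) * (1-t)^(n-(j+i))
      = (n.choose j : ℝ) * t^j *
        (((n-j).choose i : ℝ) * t^i * (1-t)^((n-j)-i)) := by
    intro i hi
    simp only [Finset.mem_range] at hi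
    rcases h1 (j+i) (Finset.mem_range.mpr (by omega)) with h | h
    · rw [h, Nat.add_sub_cancel_left]
    · omega
  rw [Finset.sum_congr rfl h3, ← Finset.mul_sum]
  have := add_pow t (1-t) (n-j)
  simp only [add_sub_cancel, one_pow] at this
  have h4 : (∑ i ∈ Finset.range ((n-j)+1),
      ((n-j).choose i : ℝ) * t^i * (1-t)^((n-j)-i)) = 1 := by
    conv_rhs => rw [this]
    exact Finset.sum_congr rfl fun i _ => by ring
  rw [h4, mul_one]


lemma key_sum (c : ℕ → ℝ) (t : ℝ) (n : ℕ) :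
    ∑ k ∈ Finset.range (n+1), (n.choose k : ℝ) * t^k *
        (∑ j ∈ Finset.range (k+1), (k.choose j : ℝ) * (-1)^j * c j) * (1-t)^(n-k)
    = ∑ j ∈ Finset.range (n+1), (n.choose j : ℝ) * (-1)^j * t^j * c j := by
  have h1 : ∀ k ∈ Finset.range (n+1),
      (n.choose k : ℝ) * t^k *
        (∑ j ∈ Finset.range (k+1), (k.choose j : ℝ) * (-1)^j * c j) * (1-t)^(n-k)
      = ∑ j ∈ Finset.range (n+1),
          ((n.choose k : ℝ) * (k.choose j : ℝ)) * t^k * (1-t)^(n-k) * ((-1)^j * c j) := by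
    intro k hk
    simp only [Finset.mem_range] at hk
    rw [Finset.sum_subset (show Finset.range (k+1) ⊆ Finset.range (n+1) by
        intro i hi; simp only [Finset.mem_range] at *; omega)
      (fun j _ hj => by
        rw [Nat.choose_eq_zero_of_lt (by simpa using hj)]; simp),
      Finset.mul_sum, Finset.sum_mul]
    exact Finset.sum_congr rfl fun j _ => by ring
  rw [Finset.sum_congr rfl h1, Finset.sum_comm]
  refine Finset.sum_congr rfl fun j hj => ?_
  simp only [Finset.mem_range] at hj
  rw [← Finset.sum_mul, inner_eval t n j (by omega)]
  ring

theorem qEulerPoly_expansion (q : ℝ) (hq0 : 0 < q) (hq1 : q < 1) (x : ℝ) (n : ℕ) :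
    2 * (1/(1-q))^n *
        ∑ j ∈ Finset.range (n+1), (n.choose j : ℝ) * (-1)^j * q ^ (x * (j:ℝ)) / (1 + q^j)
    = ∑ k ∈ Finset.range (n+1), (n.choose k : ℝ) * q ^ ((k:ℝ) * x) *
        (2 * (1/(1-q))^k *
          ∑ j ∈ Finset.range (k+1), (k.choose j : ℝ) * (-1)^j / (1 + q^j)) *
        ((1 - q ^ x)/(1-q))^(n-k) := by
  set t := q ^ x with htdef
  have htj : ∀ j : ℕ, q ^ (x * (j:ℝ)) = t ^ j := fun j => by
    rw [Real.rpow_mul hq0.le, Real.rpow_natCast]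
  have htk : ∀ k : ℕ, q ^ ((k:ℝ) * x) = t ^ k := fun k => by
    rw [mul_comm, htj]
  have hL : ∀ j ∈ Finset.range (n+1),
      (n.choose j : ℝ) * (-1)^j * q ^ (x * (j:ℝ)) / (1 + q^j)
      = (n.choose j : ℝ) * (-1)^j * t^j * (1/(1+q^j)) := fun j _ => by
    rw [htj]; ring
  have hR : ∀ k ∈ Finset.range (n+1),
      (n.choose k : ℝ) * q ^ ((k:ℝ) * x) *
        (2 * (1/(1-q))^k *
          ∑ j ∈ Finset.range (k+1), (k.choose j : ℝ) * (-1)^j / (1 + q^j)) *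
        ((1 - t)/(1-q))^(n-k)
      = 2 * (1/(1-q))^n * ((n.choose k : ℝ) * t^k *
          (∑ j ∈ Finset.range (k+1), (k.choose j : ℝ) * (-1)^j * (1/(1+q^j))) *
          (1-t)^(n-k)) := by
    intro k hk
    simp only [Finset.mem_range] at hk
    have hpow : (1/(1-q))^k * (1/(1-q))^(n-k) = (1/(1-q))^n := by
      rw [← pow_add]; congr 1; omega
    have hS : ∑ j ∈ Finset.range (k+1), (k.choose j : ℝ) * (-1)^j / (1 + q^j)
        = ∑ j ∈ Finset.range (k+1), (k.choose j : ℝ) * (-1)^j * (1/(1+q^j)) :=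
      Finset.sum_congr rfl fun j _ => by ring
    rw [htk, hS, ← hpow, div_pow]
    simp only [one_div, div_eq_mul_inv, mul_pow, inv_pow]
    ring
  rw [Finset.sum_congr rfl hL, Finset.sum_congr rfl hR, ← Finset.mul_sum,
    key_sum (fun j => 1/(1+q^j)) t n]
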